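/- arXiv:2102.00857 — 2 statements merged into one kernel-verified Lean document; each statement's English description precedes it below -/
import Mathlib

section
/- For every Banach space X, wck_X(B_X) ≤ R(X), where wck_X(A) = sup over sequences (x_n) in A of d(clust_{X**}((x_n)), X) (the distance from the set of weak* cluster points in X** to X), and R(X) = sup over sequences in B_X of inf over convex block subsequences (z_n) of ca((z_n)). -/
open Filter Topology Metric Set NormedSpace

noncomputable section

/-- `y` is a convex block subsequence of `x`. -/
def IsConvexBlock {E : Type*} [AddCommGroup E] [Module ℝ E] (x y : ℕ → E) : Prop :=
  ∃ k : ℕ → ℕ, k 0 = 0 ∧ StrictMono k ∧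
    ∀ n, y n ∈ convexHull ℝ (x '' Set.Ico (k n) (k (n + 1)))

variable (X : Type*) [NormedAddCommGroup X] [NormedSpace ℝ X]

/-- A set is weakly compact if its image in the weak topology is compact. -/
def WeaklyCompact (K : Set X) : Prop := IsCompact (toWeakSpace ℝ X '' K)

/-- A sequence is weakly null. -/
def WeaklyNull (x : ℕ → X) : Prop :=
  ∀ f : X →L[ℝ] ℝ, Tendsto (fun n => f (x n)) atTop (𝓝 0)

/-- A sequence in the dual is weak* null. -/
def WeakStarNull (f : ℕ → X →L[ℝ] ℝ) : Prop :=
  ∀ x : X, Tendsto (fun n => f n x) atTop (𝓝 0)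

/-- A sequence in the dual is weak* Cauchy. -/
def WeakStarCauchy (f : ℕ → X →L[ℝ] ℝ) : Prop :=
  ∀ x : X, ∃ L : ℝ, Tendsto (fun n => f n x) atTop (𝓝 L)

variable {X}

/-- α((f_n)) = sup over weakly compact K ⊆ B_X of limsup_n sup_{x ∈ K} |⟨f_n, x⟩|. -/
def alphaQ (f : ℕ → X →L[ℝ] ℝ) : ℝ :=
  sSup { r | ∃ K : Set X, K ⊆ closedBall 0 1 ∧ WeaklyCompact X K ∧
    r = limsup (fun n => sSup ((fun x => |f n x|) '' K)) atTop }

/-- β((f_n)) = sup over weakly null (x_n) in B_X of limsup_n |⟨f_n, x_n⟩|. -/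
def betaQ (f : ℕ → X →L[ℝ] ℝ) : ℝ :=
  sSup { r | ∃ x : ℕ → X, (∀ n, x n ∈ closedBall (0 : X) 1) ∧ WeaklyNull X x ∧
    r = limsup (fun n => |f n (x n)|) atTop }

/-- ca_{ρ*}((f_n)): measures Mackey-Cauchyness. -/
def caRho (f : ℕ → X →L[ℝ] ℝ) : ℝ :=
  sSup { r | ∃ K : Set X, K ⊆ closedBall 0 1 ∧ WeaklyCompact X K ∧
    r = ⨅ n : ℕ, sSup { t | ∃ k ≥ n, ∃ l ≥ n, ∃ x ∈ K, t = |(f k - f l) x| } }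

/-- ca((z_n)) = inf_n sup_{k,l ≥ n} ‖z_k - z_l‖. -/
def caSeq {E : Type*} [NormedAddCommGroup E] (z : ℕ → E) : ℝ :=
  ⨅ n : ℕ, sSup { r | ∃ k ≥ n, ∃ l ≥ n, r = ‖z k - z l‖ }

variable (X)

def K1 : ℝ :=
  sSup { r | ∃ f : ℕ → X →L[ℝ] ℝ, (∀ n, ‖f n‖ ≤ 1) ∧ WeakStarNull X f ∧
    r = sInf { s | ∃ g, IsConvexBlock f g ∧ s = alphaQ g } }

def K2 : ℝ :=
  sSup { r | ∃ f : ℕ → X →L[ℝ] ℝ, (∀ n, ‖f n‖ ≤ 1) ∧ WeakStarNull X f ∧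
    r = sInf { s | ∃ g, IsConvexBlock f g ∧ s = betaQ g } }

def K3 : ℝ :=
  sSup { r | ∃ f : ℕ → X →L[ℝ] ℝ, (∀ n, ‖f n‖ ≤ 1) ∧ WeakStarCauchy X f ∧
    r = sInf { s | ∃ g, IsConvexBlock f g ∧ s = caRho g } }

/-- Property (K). -/
def PropertyK : Prop :=
  ∀ f : ℕ → X →L[ℝ] ℝ, WeakStarNull X f → ∃ g, IsConvexBlock f g ∧ alphaQ g = 0

/-- The Grothendieck property: every weak* null sequence in the dual is weakly null. -/
def Grothendieck : Prop :=
  ∀ f : ℕ → X →L[ℝ] ℝ, WeakStarNull X f →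
    ∀ Φ : (X →L[ℝ] ℝ) →L[ℝ] ℝ, Tendsto (fun n => Φ (f n)) atTop (𝓝 0)

def GQ : ℝ :=
  sSup { r | ∃ f : ℕ → X →L[ℝ] ℝ, (∀ n, ‖f n‖ ≤ 1) ∧ WeakStarNull X f ∧
    r = sInf { s | ∃ g, IsConvexBlock f g ∧ s = limsup (fun n => ‖g n‖) atTop } }

def RQ : ℝ :=
  sSup { r | ∃ x : ℕ → X, (∀ n, x n ∈ closedBall (0 : X) 1) ∧
    r = sInf { s | ∃ z, IsConvexBlock x z ∧ s = caSeq z } }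

/-- weak* cluster points in the bidual of a sequence in the bidual. -/
def WStarClusterPts (u : ℕ → (X →L[ℝ] ℝ) →L[ℝ] ℝ) : Set ((X →L[ℝ] ℝ) →L[ℝ] ℝ) :=
  { z | MapClusterPt (StrongDual.toWeakDual (𝕜 := ℝ) z) atTop
      (fun n => StrongDual.toWeakDual (𝕜 := ℝ) (u n)) }

def wckQ (A : Set X) : ℝ :=
  sSup { r | ∃ x : ℕ → X, (∀ n, x n ∈ A) ∧
    r = sInf { s | ∃ z ∈ WStarClusterPts X (fun n => inclusionInDoubleDual ℝ X (x n)),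
      ∃ v : X, s = ‖z - inclusionInDoubleDual ℝ X v‖ } }

section auxx
variable {Y : Type*} [NormedAddCommGroup Y] [NormedSpace ℝ Y]

lemma aux_block_mem {y z : ℕ → Y} {C : Set Y} (hC : Convex ℝ C) (hy : ∀ n, y n ∈ C)
    (hz : IsConvexBlock y z) (m : ℕ) : z m ∈ C := by
  obtain ⟨k, -, -, hmem⟩ := hz
  exact convexHull_min (by rintro u ⟨j, -, rfl⟩; exact hy j) hC (hmem m)

lemma caSeq_S_bdd {z : ℕ → Y} (hz : ∀ n, z n ∈ closedBall (0:Y) 1) (n : ℕ) :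
    ∀ r ∈ {r | ∃ k ≥ n, ∃ l ≥ n, r = ‖z k - z l‖}, r ≤ 2 := by
  rintro r ⟨k, -, l, -, rfl⟩
  have hk := mem_closedBall_zero_iff.1 (hz k)
  have hl := mem_closedBall_zero_iff.1 (hz l)
  calc ‖z k - z l‖ ≤ ‖z k‖ + ‖z l‖ := norm_sub_le _ _
  _ ≤ 2 := by linarith

lemma caSeq_zero_mem (z : ℕ → Y) (n : ℕ) :
    (0:ℝ) ∈ {r | ∃ k ≥ n, ∃ l ≥ n, r = ‖z k - z l‖} :=
  ⟨n, le_rfl, n, le_rfl, by simp⟩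

lemma caSeq_nonneg {z : ℕ → Y} (hz : ∀ n, z n ∈ closedBall (0:Y) 1) : 0 ≤ caSeq z :=
  le_ciInf fun n => le_csSup ⟨2, caSeq_S_bdd hz n⟩ (caSeq_zero_mem z n)

lemma caSeq_le_two {z : ℕ → Y} (hz : ∀ n, z n ∈ closedBall (0:Y) 1) : caSeq z ≤ 2 := by
  refine le_trans (ciInf_le ?_ 0) (Real.sSup_le (caSeq_S_bdd hz 0) (by norm_num))
  exact ⟨0, by rintro _ ⟨n, rfl⟩; exact le_csSup ⟨2, caSeq_S_bdd hz n⟩ (caSeq_zero_mem z n)⟩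

lemma isConvexBlock_self (x : ℕ → Y) : IsConvexBlock x x :=
  ⟨id, rfl, strictMono_id, fun n =>
    subset_convexHull ℝ _ ⟨n, ⟨le_rfl, Nat.lt_succ_self n⟩, rfl⟩⟩

lemma caSeq_const (c : Y) : caSeq (fun _ => c) = 0 := by
  have hS : ∀ n : ℕ, {r | ∃ k ≥ n, ∃ l ≥ n, r = ‖(fun _ : ℕ => c) k - (fun _ : ℕ => c) l‖}
      = {(0:ℝ)} := by
    intro n
    ext r
    constructor
    · rintro ⟨k, -, l, -, rfl⟩; simp
    · rintro rfl; exact ⟨n, le_rfl, n, le_rfl, by simp⟩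
  simp only [caSeq, hS, csSup_singleton, ciInf_const]

lemma isSeparable_convexHull_range (x : ℕ → Y) :
    TopologicalSpace.IsSeparable (convexHull ℝ (Set.range x)) := by
  have hsub : convexHull ℝ (Set.range x) ⊆ ⋃ S : Finset ℕ, convexHull ℝ (x '' ↑S) := by
    intro p hp
    rw [convexHull_eq_union_convexHull_finite_subsets] at hp
    simp only [Set.mem_iUnion] at hp ⊢
    obtain ⟨t, ht, hpt⟩ := hp
    choose g hg using fun (u : Y) (hu : u ∈ t) => ht hu
    refine ⟨t.attach.image (fun u => g u.1 u.2), convexHull_mono ?_ hpt⟩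
    intro u hu
    have hu' : u ∈ t := hu
    refine ⟨g u hu', ?_, hg u hu'⟩
    simp only [Finset.coe_image, Set.mem_image, Finset.mem_coe, Finset.mem_attach]
    exact ⟨⟨u, hu'⟩, by simp⟩
  exact TopologicalSpace.IsSeparable.mono
    (TopologicalSpace.isSeparable_iUnion.2 fun S =>
      ((S.finite_toSet.image x).isCompact_convexHull ℝ).isSeparable) hsub

end auxx

section mainproof

variable {W : Type*} [NormedAddCommGroup W] [NormedSpace ℝ W]

lemma RQ_innerSet_nonempty (x : ℕ → W) :
    {s | ∃ z, IsConvexBlock x z ∧ s = caSeq z}.Nonempty :=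
  ⟨caSeq x, x, isConvexBlock_self x, rfl⟩

lemma RQ_inner_nonneg {x : ℕ → W} (hx : ∀ n, x n ∈ closedBall (0:W) 1) :
    ∀ s ∈ {s | ∃ z, IsConvexBlock x z ∧ s = caSeq z}, 0 ≤ s := by
  rintro s ⟨z, hz, rfl⟩
  exact caSeq_nonneg (fun m => aux_block_mem (convex_closedBall _ _) hx hz m)

lemma RQ_bddAbove : BddAbove {r | ∃ x : ℕ → W, (∀ n, x n ∈ closedBall (0 : W) 1) ∧
    r = sInf { s | ∃ z, IsConvexBlock x z ∧ s = caSeq z }} := by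
  refine ⟨2, ?_⟩
  rintro r ⟨x, hx, rfl⟩
  exact le_trans (csInf_le ⟨0, fun s hs => RQ_inner_nonneg hx s hs⟩
    ⟨x, isConvexBlock_self x, rfl⟩) (caSeq_le_two hx)

lemma RQ_nonneg (V : Type*) [NormedAddCommGroup V] [NormedSpace ℝ V] : 0 ≤ RQ V := by
  have h0 : ∀ n : ℕ, (fun _ : ℕ => (0:V)) n ∈ closedBall (0:V) 1 :=
    fun _ => mem_closedBall_self zero_le_one
  refine le_csSup RQ_bddAbove ⟨fun _ => (0:V), h0, ?_⟩
  refine le_antisymm (le_csInf (RQ_innerSet_nonempty _) (RQ_inner_nonneg h0)) ?_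
  exact csInf_le ⟨0, fun s hs => RQ_inner_nonneg h0 s hs⟩
    ⟨fun _ => (0:V), isConvexBlock_self _, (caSeq_const (0:V)).symm⟩

lemma key_lemma {X : Type*} [NormedAddCommGroup X] [NormedSpace ℝ X]
    {x : ℕ → X} (hx : ∀ n, x n ∈ closedBall (0:X) 1)
    {Φ : (X →L[ℝ] ℝ) →L[ℝ] ℝ}
    (hΦ : Φ ∈ WStarClusterPts X (fun n => inclusionInDoubleDual ℝ X (x n)))
    {r : ℝ} (hr : ∀ v : X, r ≤ ‖Φ - inclusionInDoubleDual ℝ X v‖)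
    {ε : ℝ} (hε : 0 < ε) : r ≤ RQ X + 3 * ε := by
  classical
  -- countable dense family in the convex hull of the range of x
  obtain ⟨T, hTc, hTsub⟩ := isSeparable_convexHull_range x
  have hTne : T.Nonempty := by
    rcases Set.eq_empty_or_nonempty T with h | h
    · exfalso
      have : x 0 ∈ closure T := hTsub (subset_convexHull ℝ _ (Set.mem_range_self 0))
      rw [h, closure_empty] at this
      exact this
    · exact h
  obtain ⟨w, hw⟩ := hTc.exists_eq_range hTne
  -- norming functionals
  have hf : ∀ t : ℕ, ∃ f : X →L[ℝ] ℝ, ‖f‖ ≤ 1 ∧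
      r - ε < |(Φ - inclusionInDoubleDual ℝ X (w t)) f| := by
    intro t
    by_contra h
    push_neg at h
    set G := Φ - inclusionInDoubleDual ℝ X (w t) with hG
    have h0 : 0 ≤ r - ε := by
      have := h 0 (by simp)
      simpa using this
    have hle : ‖G‖ ≤ r - ε := by
      refine ContinuousLinearMap.opNorm_le_bound G h0 (fun f => ?_)
      rcases eq_or_ne f 0 with rfl | hf0
      · simp
      · have hc : (0:ℝ) < ‖f‖ := norm_pos_iff.2 hf0
        have hu : ‖(‖f‖)⁻¹ • f‖ ≤ 1 := by
          have hns := norm_smul (‖f‖)⁻¹ f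
          rw [hns, norm_inv, norm_norm, inv_mul_cancel₀ hc.ne']
        have h2 := h _ hu
        have h3 : G ((‖f‖)⁻¹ • f) = (‖f‖)⁻¹ * G f := by
          rw [map_smul]; rfl
        rw [h3, abs_mul, abs_inv, abs_norm] at h2
        have := mul_le_mul_of_nonneg_left h2 hc.le
        rw [mul_inv_cancel_left₀ hc.ne'] at this
        calc ‖G f‖ = |G f| := rfl
          _ ≤ (r - ε) * ‖f‖ := by rw [mul_comm] at this; exact this
    have := hr (w t)
    rw [← hG] at this
    linarith
  choose f hf1 hf2 using hf
  -- pick terms of the sequence close to Φ on finitely many functionals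
  have hN : ∀ j : ℕ, ∃ n : ℕ, ∀ t ≤ j, |f t (x n) - Φ (f t)| < ε := by
    intro j
    set V : Set (WeakDual ℝ (X →L[ℝ] ℝ)) :=
      ⋂ t ∈ Finset.Iic j, (fun Ψ : WeakDual ℝ (X →L[ℝ] ℝ) => Ψ (f t)) ⁻¹'
        (Metric.ball (Φ (f t)) ε) with hV
    have hVopen : IsOpen V :=
      isOpen_biInter_finset fun t _ =>
        (WeakDual.eval_continuous (f t)).isOpen_preimage _ Metric.isOpen_ball
    have hVmem : StrongDual.toWeakDual (𝕜 := ℝ) Φ ∈ V := by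
      simp only [hV, Set.mem_iInter, Set.mem_preimage, Metric.mem_ball]
      intro t _
      simpa using hε
    have hfreq := (mapClusterPt_iff_frequently.mp hΦ V (hVopen.mem_nhds hVmem)).exists
    obtain ⟨n, hn⟩ := hfreq
    refine ⟨n, fun t ht => ?_⟩
    simp only [hV, Set.mem_iInter, Set.mem_preimage, Metric.mem_ball] at hn
    have := hn t (Finset.mem_Iic.2 ht)
    rw [Real.dist_eq] at this
    simpa using this
  choose N hNp using hN
  set y : ℕ → X := fun j => x (N j) with hy_def
  have hy : ∀ j, y j ∈ closedBall (0:X) 1 := fun j => hx _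
  -- every convex block of y has large caSeq
  have hblock : ∀ z, IsConvexBlock y z → r - 3 * ε ≤ caSeq z := by
    rintro z hzb
    obtain ⟨K, hK0, hKmono, hKmem⟩ := hzb
    have hzball : ∀ m, z m ∈ closedBall (0:X) 1 :=
      fun m => aux_block_mem (convex_closedBall _ _) hy ⟨K, hK0, hKmono, hKmem⟩ m
    refine le_ciInf (fun n => ?_)
    -- approximate z n by some w t
    have hzn : z n ∈ closure T := by
      refine hTsub ?_
      refine convexHull_mono ?_ (hKmem n)
      rintro u ⟨j, -, rfl⟩
      exact Set.mem_range_self (N j)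
    obtain ⟨t, htdist⟩ : ∃ t, dist (z n) (w t) < ε := by
      rcases Metric.mem_closure_iff.mp hzn ε hε with ⟨b, hbT, hb⟩
      rw [hw] at hbT
      obtain ⟨t, rfl⟩ := hbT
      exact ⟨t, hb⟩
    set l := max n t with hl
    have hzl : |f t (z l) - Φ (f t)| ≤ ε := by
      have hconv : Convex ℝ {u : X | |f t u - Φ (f t)| ≤ ε} := by
        have heq : {u : X | |f t u - Φ (f t)| ≤ ε}
            = (f t) ⁻¹' (Metric.closedBall (Φ (f t)) ε) := by
          ext u; simp [Real.dist_eq]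
        rw [heq]
        have := (convex_closedBall (Φ (f t)) ε).linear_preimage ((f t) : X →ₗ[ℝ] ℝ)
        simpa using this
      refine convexHull_min ?_ hconv (hKmem l)
      rintro u ⟨j, hj, rfl⟩
      have hjt : t ≤ j :=
        le_trans (le_trans (le_max_right n t) hKmono.le_apply) hj.1
      exact (hNp j t hjt).le
    have h1 : r - ε < |Φ (f t) - f t (w t)| := by
      have := hf2 t
      simpa [ContinuousLinearMap.sub_apply] using this
    have h3 : |f t (z n) - f t (w t)| ≤ ε := by
      have heq : f t (z n) - f t (w t) = f t (z n - w t) := by rw [map_sub]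
      rw [heq]
      calc |f t (z n - w t)| ≤ ‖f t‖ * ‖z n - w t‖ := (f t).le_opNorm _
        _ ≤ 1 * ε := by
            apply mul_le_mul (hf1 t) _ (norm_nonneg _) zero_le_one
            rw [← dist_eq_norm]; exact htdist.le
        _ = ε := one_mul ε
    have h4 : r - 3 * ε < |f t (z l) - f t (z n)| := by
      have tri1 := abs_sub_le (Φ (f t)) (f t (z l)) (f t (w t))
      have tri2 := abs_sub_le (f t (z l)) (f t (z n)) (f t (w t))
      have hcomm := abs_sub_comm (Φ (f t)) (f t (z l))
      linarith [hzl, h3]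
    have h5 : r - 3 * ε < ‖z l - z n‖ := by
      have heq : f t (z l) - f t (z n) = f t (z l - z n) := by rw [map_sub]
      have hop : |f t (z l - z n)| ≤ ‖f t‖ * ‖z l - z n‖ := (f t).le_opNorm _
      have hb : ‖f t‖ * ‖z l - z n‖ ≤ 1 * ‖z l - z n‖ :=
        mul_le_mul_of_nonneg_right (hf1 t) (norm_nonneg _)
      rw [heq] at h4
      linarith
    refine le_trans h5.le (le_csSup ⟨2, caSeq_S_bdd hzball n⟩ ?_)
    exact ⟨l, le_max_left n t, n, le_rfl, rfl⟩
  -- conclude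
  have hge : r - 3 * ε ≤ sInf {s | ∃ z, IsConvexBlock y z ∧ s = caSeq z} :=
    le_csInf (RQ_innerSet_nonempty y) (by rintro s ⟨z, hz, rfl⟩; exact hblock z hz)
  have hle : sInf {s | ∃ z, IsConvexBlock y z ∧ s = caSeq z} ≤ RQ X :=
    le_csSup RQ_bddAbove ⟨y, hy, rfl⟩
  linarith

end mainproof

theorem stmt14 {X : Type*} [NormedAddCommGroup X] [NormedSpace ℝ X] [CompleteSpace X] :
    wckQ X (closedBall (0 : X) 1) ≤ RQ X := by
  have hRQ0 : 0 ≤ RQ X := RQ_nonneg X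
  refine Real.sSup_le ?_ hRQ0
  rintro r ⟨x, hx, rfl⟩
  set I := {s | ∃ z ∈ WStarClusterPts X (fun n => inclusionInDoubleDual ℝ X (x n)),
      ∃ v : X, s = ‖z - inclusionInDoubleDual ℝ X v‖} with hI
  rcases Set.eq_empty_or_nonempty I with hIe | hIne
  · rw [hIe]
    simpa [Real.sInf_empty] using hRQ0
  · obtain ⟨s0, Φ, hΦ, v0, hs0⟩ := hIne
    have hIbdd : BddBelow I := ⟨0, by rintro s ⟨z, hz, v, rfl⟩; positivity⟩
    have hr : ∀ v : X, sInf I ≤ ‖Φ - inclusionInDoubleDual ℝ X v‖ :=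
      fun v => csInf_le hIbdd ⟨Φ, hΦ, v, rfl⟩
    by_contra hcon
    push_neg at hcon
    have hε : 0 < (sInf I - RQ X) / 4 := by linarith
    have := key_lemma hx hΦ hr hε
    linarith
end
end

section
/- 1 ≤ R(c₀) ≤ 4/3: every sequence in B_{c₀} admits a convex block subsequence (z_n) with ca((z_n)) ≤ 4/3; in fact after passing to a coordinatewise-convergent subsequence with successive finite supports one may take z_n = (2/3)x_{2n} + (1/3)x_{2n+1}. -/
open Filter Topology Metric Set NormedSpace

noncomputable section

variable (X : Type*) [NormedAddCommGroup X] [NormedSpace ℝ X]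

variable {X}

variable (X)

abbrev C0 := ZeroAtInftyContinuousMap ℕ ℝ

lemma abs_apply_le_norm (f : C0) (j : ℕ) : |f j| ≤ ‖f‖ :=
  f.toBCF.norm_coe_le_norm j

lemma norm_le_of (f : C0) {c : ℝ} (hc : 0 ≤ c) (h : ∀ j, |f j| ≤ c) : ‖f‖ ≤ c := by
  rw [← ZeroAtInftyContinuousMap.norm_toBCF_eq_norm]
  exact (BoundedContinuousFunction.norm_le hc).2 h

def ee (n : ℕ) : C0 :=
  ⟨⟨fun j => if j ≤ n then 1 else 0, continuous_of_discreteTopology⟩, by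
    rw [cocompact_eq_atTop]
    refine Tendsto.congr' ?_ tendsto_const_nhds
    filter_upwards [eventually_gt_atTop n] with j hj
    simp [Nat.not_le.2 hj]⟩

lemma ee_apply (n j : ℕ) : ee n j = if j ≤ n then 1 else 0 := rfl

lemma ee_mem : ∀ n, ee n ∈ closedBall (0 : C0) 1 := by
  intro n
  rw [mem_closedBall_zero_iff]
  refine norm_le_of _ one_pos.le fun j => ?_
  rw [ee_apply]; split <;> simp

lemma apply_of_mem_hull {s : Set C0} {f : C0} (hf : f ∈ convexHull ℝ s) {j : ℕ} {c : ℝ}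
    (h : ∀ g ∈ s, g j = c) : f j = c := by
  have hc : Convex ℝ {g : C0 | g j = c} := by
    intro p hp q hq u v hu hv huv
    simp only [Set.mem_setOf_eq] at hp hq ⊢
    have : (u • p + v • q) j = u * p j + v * q j := by
      simp [ZeroAtInftyContinuousMap.coe_add, ZeroAtInftyContinuousMap.coe_smul, Pi.add_apply,
        smul_eq_mul]
    rw [this, hp, hq, ← add_mul, huv, one_mul]
  exact convexHull_min h hc hf

lemma sSup_nonneg' {E : Type*} [NormedAddCommGroup E] (z : ℕ → E) (n : ℕ) :
    0 ≤ sSup { r | ∃ k ≥ n, ∃ l ≥ n, r = ‖z k - z l‖ } := by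
  refine Real.sSup_nonneg ?_
  rintro r ⟨k, -, l, -, rfl⟩; positivity

lemma caSeq_nonneg_s16 {E : Type*} [NormedAddCommGroup E] (z : ℕ → E) : 0 ≤ caSeq z :=
  Real.iInf_nonneg (sSup_nonneg' z)

lemma caSeq_le_of {E : Type*} [NormedAddCommGroup E] (z : ℕ → E) (n : ℕ) {c : ℝ} (hc : 0 ≤ c)
    (h : ∀ k ≥ n, ∀ l ≥ n, ‖z k - z l‖ ≤ c) : caSeq z ≤ c := by
  refine le_trans (ciInf_le ⟨0, ?_⟩ n) (Real.sSup_le ?_ hc)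
  · rintro r ⟨m, rfl⟩; exact sSup_nonneg' z m
  · rintro r ⟨k, hk, l, hl, rfl⟩; exact h k hk l hl

lemma isConvexBlock_self_s16 {E : Type*} [AddCommGroup E] [Module ℝ E] (x : ℕ → E) :
    IsConvexBlock x x := by
  refine ⟨id, rfl, strictMono_id, fun n => ?_⟩
  refine subset_convexHull ℝ _ ⟨n, ?_, rfl⟩
  simp [Set.mem_Ico]

lemma caSeq_le_two_s16 {E : Type*} [NormedAddCommGroup E] (x : ℕ → E)
    (hx : ∀ n, x n ∈ closedBall (0 : E) 1) : caSeq x ≤ 2 := by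
  refine caSeq_le_of x 0 (by norm_num) fun k _ l _ => ?_
  have h1 := mem_closedBall_zero_iff.1 (hx k)
  have h2 := mem_closedBall_zero_iff.1 (hx l)
  calc ‖x k - x l‖ ≤ ‖x k‖ + ‖x l‖ := norm_sub_le _ _
    _ ≤ 2 := by linarith

lemma norm_z_le_one {z : ℕ → C0} {k : ℕ → ℕ} (hmem : ∀ n, z n ∈ convexHull ℝ (ee '' Set.Ico (k n) (k (n + 1)))) (n : ℕ) : ‖z n‖ ≤ 1 := by
  have : z n ∈ closedBall (0 : C0) 1 := by
    refine convexHull_min ?_ (convex_closedBall _ _) (hmem n)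
    rintro g ⟨i, -, rfl⟩; exact ee_mem i
  exact mem_closedBall_zero_iff.1 this

lemma one_le_caSeq_block {z : ℕ → C0} (hz : IsConvexBlock ee z) : 1 ≤ caSeq z := by
  obtain ⟨k, hk0, hkm, hmem⟩ := hz
  refine le_ciInf fun n => ?_
  have hb : BddAbove { r | ∃ i ≥ n, ∃ l ≥ n, r = ‖z i - z l‖ } := by
    refine ⟨2, ?_⟩
    rintro r ⟨i, -, l, -, rfl⟩
    calc ‖z i - z l‖ ≤ ‖z i‖ + ‖z l‖ := norm_sub_le _ _
      _ ≤ 2 := by linarith [norm_z_le_one hmem i, norm_z_le_one hmem l]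
  have hel : ‖z (n+1) - z n‖ ∈ { r | ∃ i ≥ n, ∃ l ≥ n, r = ‖z i - z l‖ } :=
    ⟨n+1, Nat.le_succ n, n, le_refl n, rfl⟩
  refine le_trans ?_ (le_csSup hb hel)
  -- 1 ≤ ‖z (n+1) - z n‖
  have h1 : z (n+1) (k (n+1)) = 1 := by
    refine apply_of_mem_hull (hmem (n+1)) ?_
    rintro g ⟨i, hi, rfl⟩
    rw [ee_apply, if_pos hi.1]
  have h0 : z n (k (n+1)) = 0 := by
    refine apply_of_mem_hull (hmem n) ?_
    rintro g ⟨i, hi, rfl⟩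
    rw [ee_apply, if_neg (Nat.not_le.2 hi.2)]
  have := abs_apply_le_norm (z (n+1) - z n) (k (n+1))
  rw [ZeroAtInftyContinuousMap.coe_sub, Pi.sub_apply, h1, h0] at this
  simpa using this

lemma step_compact (x : ℕ → C0) (hx : ∀ n, x n ∈ closedBall (0:C0) 1) :
    ∃ (a : ℕ → ℝ) (φ : ℕ → ℕ), StrictMono φ ∧ (∀ j, |a j| ≤ 1) ∧
      ∀ j, Tendsto (fun m => x (φ m) j) atTop (𝓝 (a j)) := by
  have habs : ∀ n j, |x n j| ≤ 1 := fun n j =>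
    (abs_apply_le_norm (x n) j).trans (mem_closedBall_zero_iff.1 (hx n))
  have hs : IsCompact (Set.univ.pi fun _ : ℕ => Icc (-1:ℝ) 1) :=
    isCompact_univ_pi fun _ => isCompact_Icc
  have hmem : ∀ n, (fun j => x n j) ∈ Set.univ.pi fun _ : ℕ => Icc (-1:ℝ) 1 := by
    intro n j _
    exact abs_le.1 (habs n j)
  obtain ⟨a, ha, φ, hφ, hconv⟩ := hs.tendsto_subseq hmem
  refine ⟨a, φ, hφ, fun j => abs_le.2 (ha j trivial), fun j => ?_⟩
  exact tendsto_pi_nhds.1 hconv j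

lemma step_key (x : ℕ → C0) (a : ℕ → ℝ) (φ : ℕ → ℕ)
    (hconv : ∀ j, Tendsto (fun m => x (φ m) j) atTop (𝓝 (a j))) :
    ∀ (i M0 N0 : ℕ), ∃ M N1, M0 < M ∧ N0 < N1 ∧
      (∀ j ≤ N0, |x (φ M) j - a j| ≤ (1/2)^i) ∧ (∀ j > N1, |x (φ M) j| ≤ (1/2)^i) := by
  intro i M0 N0
  have hε : (0:ℝ) < (1/2)^i := by positivity
  have hj : ∀ j, ∀ᶠ m in atTop, |x (φ m) j - a j| ≤ (1/2)^i := by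
    intro j
    refine Tendsto.eventually (p := fun y => |y - a j| ≤ (1/2)^i) (hconv j) ?_
    filter_upwards [Metric.closedBall_mem_nhds (a j) hε] with y hy
    rwa [mem_closedBall, Real.dist_eq] at hy
  have h1 : ∀ᶠ m in atTop, ∀ j ∈ Finset.range (N0+1), |x (φ m) j - a j| ≤ (1/2)^i :=
    (Finset.range (N0+1)).eventually_all.2 fun j _ => hj j
  obtain ⟨M, hM1, hM2⟩ := ((eventually_gt_atTop M0).and h1).exists
  have h2 : ∀ᶠ j in atTop, |x (φ M) j| ≤ (1/2)^i := by
    have h3 : Tendsto (x (φ M)) atTop (𝓝 0) := by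
      have := ZeroAtInftyContinuousMapClass.zero_at_infty (x (φ M))
      rwa [cocompact_eq_atTop] at this
    refine Tendsto.eventually (p := fun y => |y| ≤ (1/2)^i) h3 ?_
    filter_upwards [Metric.closedBall_mem_nhds (0:ℝ) hε] with y hy
    rwa [mem_closedBall, Real.dist_eq, sub_zero] at hy
  obtain ⟨T, hT⟩ := eventually_atTop.1 h2
  refine ⟨M, max T (N0+1), hM1, ?_, fun j hjn => hM2 j (Finset.mem_range.2 (Nat.lt_succ_of_le hjn)), fun j hjg => hT j ?_⟩
  · exact lt_of_lt_of_le (Nat.lt_succ_self N0) (le_max_right _ _)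
  · exact le_of_lt (lt_of_le_of_lt (le_max_left T (N0+1)) hjg)

lemma step_rec (x : ℕ → C0) (a : ℕ → ℝ) (φ : ℕ → ℕ)
    (hconv : ∀ j, Tendsto (fun m => x (φ m) j) atTop (𝓝 (a j))) :
    ∃ (m N : ℕ → ℕ), StrictMono m ∧ StrictMono N ∧
      (∀ i, ∀ j ≤ N i, |x (φ (m (i+1))) j - a j| ≤ (1/2)^(i+1)) ∧
      (∀ i, ∀ j > N i, |x (φ (m i)) j| ≤ (1/2)^i) := by
  choose M! N! hlt hNlt hconv' hsupp using step_key x a φ hconv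
  let g : ℕ → ℕ × ℕ := fun i =>
    Nat.rec (M! 0 0 0, N! 0 0 0) (fun i p => (M! (i+1) p.1 p.2, N! (i+1) p.1 p.2)) i
  have hg : ∀ i, g (i+1) = (M! (i+1) (g i).1 (g i).2, N! (i+1) (g i).1 (g i).2) := fun i => rfl
  refine ⟨fun i => (g i).1, fun i => (g i).2, ?_, ?_, ?_, ?_⟩
  · refine strictMono_nat_of_lt_succ fun i => ?_
    rw [hg]; exact hlt (i+1) _ _
  · refine strictMono_nat_of_lt_succ fun i => ?_
    rw [hg]; exact hNlt (i+1) _ _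
  · intro i j hj
    exact hconv' (i+1) (g i).1 (g i).2 j hj
  · intro i
    cases i with
    | zero => exact hsupp 0 0 0
    | succ i => exact hsupp (i+1) (g i).1 (g i).2

lemma exists_block (x : ℕ → C0) (hx : ∀ n, x n ∈ closedBall (0:C0) 1) :
    ∃ z : ℕ → C0, IsConvexBlock x z ∧ caSeq z ≤ 4/3 := by
  obtain ⟨a, φ, hφ, ha, hconv⟩ := step_compact x hx
  obtain ⟨m, N, hm, hN, C1, C2⟩ := step_rec x a φ hconv
  set ψ : ℕ → ℕ := fun i => φ (m i) with hψdef
  have hψm : StrictMono ψ := hφ.comp hm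
  set y : ℕ → C0 := fun i => x (ψ i) with hydef
  have hy1 : ∀ i j, |y i j| ≤ 1 := fun i j =>
    (abs_apply_le_norm _ j).trans (mem_closedBall_zero_iff.1 (hx _))
  have C1' : ∀ i i', i < i' → ∀ j ≤ N i, |y i' j - a j| ≤ (1/2:ℝ)^i' := by
    intro i i' hii' j hj
    cases i' with
    | zero => omega
    | succ i'' => exact C1 i'' j (hj.trans (hN.monotone (by omega)))
  have C2' : ∀ i j, N i < j → |y i j| ≤ (1/2:ℝ)^i := fun i j hj => C2 i j hj
  set z : ℕ → C0 := fun i => (2/3 : ℝ) • y (2*i) + (1/3 : ℝ) • y (2*i+1) with hzdef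
  have hzj : ∀ i j, z i j = (2/3) * y (2*i) j + (1/3) * y (2*i+1) j := by
    intro i j
    show ((2/3 : ℝ) • y (2*i) + (1/3 : ℝ) • y (2*i+1)) j = _
    simp [ZeroAtInftyContinuousMap.coe_add, ZeroAtInftyContinuousMap.coe_smul, smul_eq_mul]
  have emono : ∀ {i i' : ℕ}, i ≤ i' → ((1/2:ℝ))^i' ≤ (1/2)^i := fun h =>
    pow_le_pow_of_le_one (by norm_num) (by norm_num) h
  -- convex block structure
  have hblock : IsConvexBlock x z := by
    refine ⟨fun i => if i = 0 then 0 else ψ (2*i), if_pos rfl, ?_, ?_⟩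
    · refine strictMono_nat_of_lt_succ fun i => ?_
      cases i with
      | zero =>
        simp only [if_pos, if_neg (Nat.one_ne_zero)]
        exact lt_of_le_of_lt (Nat.zero_le (ψ 0)) (hψm (by omega))
      | succ i =>
        simp only [if_neg (Nat.succ_ne_zero _)]
        exact hψm (by omega)
    · intro i
      have h2i : ψ (2*i) ∈ Set.Ico (if i = 0 then 0 else ψ (2*i)) (if i + 1 = 0 then 0 else ψ (2*(i+1))) := by
        simp only [if_neg (Nat.succ_ne_zero _)]
        split
        · next h => subst h; exact ⟨Nat.zero_le _, hψm (by omega)⟩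
        · exact ⟨le_refl _, hψm (by omega)⟩
      have h2i1 : ψ (2*i+1) ∈ Set.Ico (if i = 0 then 0 else ψ (2*i)) (if i + 1 = 0 then 0 else ψ (2*(i+1))) := by
        simp only [if_neg (Nat.succ_ne_zero _)]
        split
        · exact ⟨Nat.zero_le _, hψm (by omega)⟩
        · exact ⟨(hψm (by omega)).le, hψm (by omega)⟩
      have hmemA : x (ψ (2*i)) ∈ x '' Set.Ico (if i = 0 then 0 else ψ (2*i)) (if i + 1 = 0 then 0 else ψ (2*(i+1))) := ⟨ψ (2*i), h2i, rfl⟩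
      have hmemB : x (ψ (2*i+1)) ∈ x '' Set.Ico (if i = 0 then 0 else ψ (2*i)) (if i + 1 = 0 then 0 else ψ (2*(i+1))) := ⟨ψ (2*i+1), h2i1, rfl⟩
      exact (convex_convexHull ℝ _)
        (subset_convexHull ℝ _ hmemA)
        (subset_convexHull ℝ _ hmemB)
        (by norm_num) (by norm_num) (by norm_num)
  -- pointwise estimate
  have hpt : ∀ k l, k < l → ∀ j, |z k j - z l j| ≤ 4/3 + 2 * (1/2:ℝ)^(2*k) := by
    intro k l hkl j
    have hα := abs_le.1 (ha j)
    have hε0 : (0:ℝ) ≤ (1/2:ℝ)^(2*k) := by positivity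
    have em1 : ((1/2:ℝ))^(2*k+1) ≤ (1/2)^(2*k) := emono (by omega)
    have em2 : ((1/2:ℝ))^(2*l) ≤ (1/2)^(2*k) := emono (by omega)
    have em3 : ((1/2:ℝ))^(2*l+1) ≤ (1/2)^(2*k) := emono (by omega)
    rw [hzj, hzj, abs_le]
    rcases le_or_gt j (N (2*k)) with h1 | h1
    · have hB := abs_le.1 (C1' (2*k) (2*k+1) (by omega) j h1)
      have hC := abs_le.1 (C1' (2*k) (2*l) (by omega) j h1)
      have hD := abs_le.1 (C1' (2*k) (2*l+1) (by omega) j h1)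
      have hA := abs_le.1 (hy1 (2*k) j)
      constructor <;> linarith
    rcases le_or_gt j (N (2*k+1)) with h2 | h2
    · have hA := abs_le.1 (C2' (2*k) j h1)
      have hB := abs_le.1 (hy1 (2*k+1) j)
      have hC := abs_le.1 (C1' (2*k+1) (2*l) (by omega) j h2)
      have hD := abs_le.1 (C1' (2*k+1) (2*l+1) (by omega) j h2)
      constructor <;> linarith
    rcases le_or_gt j (N (2*l-1)) with h3 | h3
    · have hA := abs_le.1 (C2' (2*k) j h1)
      have hB := abs_le.1 (C2' (2*k+1) j h2)
      have hC := abs_le.1 (C1' (2*l-1) (2*l) (by omega) j h3)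
      have hD := abs_le.1 (C1' (2*l-1) (2*l+1) (by omega) j h3)
      constructor <;> linarith
    rcases le_or_gt j (N (2*l)) with h4 | h4
    · have hA := abs_le.1 (C2' (2*k) j h1)
      have hB := abs_le.1 (C2' (2*k+1) j h2)
      have hC := abs_le.1 (hy1 (2*l) j)
      have hD := abs_le.1 (C1' (2*l) (2*l+1) (by omega) j h4)
      constructor <;> linarith
    rcases le_or_gt j (N (2*l+1)) with h5 | h5
    · have hA := abs_le.1 (C2' (2*k) j h1)
      have hB := abs_le.1 (C2' (2*k+1) j h2)
      have hC := abs_le.1 (C2' (2*l) j h4)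
      have hD := abs_le.1 (hy1 (2*l+1) j)
      constructor <;> linarith
    · have hA := abs_le.1 (C2' (2*k) j h1)
      have hB := abs_le.1 (C2' (2*k+1) j h2)
      have hC := abs_le.1 (C2' (2*l) j h4)
      have hD := abs_le.1 (C2' (2*l+1) j h5)
      constructor <;> linarith
  -- norm estimate
  have hnorm : ∀ n, ∀ k ≥ n, ∀ l ≥ n, ‖z k - z l‖ ≤ 4/3 + 2*(1/2:ℝ)^(2*n) := by
    intro n k hk l hl
    have hb : (0:ℝ) ≤ 4/3 + 2*(1/2:ℝ)^(2*n) := by positivity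
    rcases lt_trichotomy k l with h | h | h
    · refine norm_le_of _ hb fun j => ?_
      rw [ZeroAtInftyContinuousMap.coe_sub, Pi.sub_apply]
      refine (hpt k l h j).trans ?_
      have := emono (show 2*n ≤ 2*k by omega)
      linarith
    · subst h; simpa using hb
    · rw [norm_sub_rev]
      refine norm_le_of _ hb fun j => ?_
      rw [ZeroAtInftyContinuousMap.coe_sub, Pi.sub_apply]
      refine (hpt l k h j).trans ?_
      have := emono (show 2*n ≤ 2*l by omega)
      linarith
  refine ⟨z, hblock, ?_⟩
  have hca : ∀ n, caSeq z ≤ 4/3 + 2*(1/2:ℝ)^(2*n) := fun n =>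
    caSeq_le_of z n (by positivity) (hnorm n)
  refine le_of_forall_pos_le_add fun ε hε => ?_
  obtain ⟨n, hn⟩ := exists_pow_lt_of_lt_one (show (0:ℝ) < ε/2 by linarith) (show (1/2:ℝ) < 1 by norm_num)
  refine (hca n).trans ?_
  have : ((1/2:ℝ))^(2*n) ≤ (1/2)^n := emono (by omega)
  linarith

theorem stmt16 : 1 ≤ RQ (ZeroAtInftyContinuousMap ℕ ℝ) ∧
    RQ (ZeroAtInftyContinuousMap ℕ ℝ) ≤ 4 / 3 := by
  have hlb : ∀ x : ℕ → C0,
      BddBelow { s | ∃ z, IsConvexBlock x z ∧ s = caSeq z } := by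
    intro x
    refine ⟨0, ?_⟩
    rintro s ⟨z, -, rfl⟩
    exact caSeq_nonneg_s16 z
  constructor
  · rw [RQ]
    have hbdd : BddAbove { r | ∃ x : ℕ → C0, (∀ n, x n ∈ closedBall (0 : C0) 1) ∧
        r = sInf { s | ∃ z, IsConvexBlock x z ∧ s = caSeq z } } := by
      refine ⟨2, ?_⟩
      rintro r ⟨x, hx, rfl⟩
      exact le_trans (csInf_le (hlb x) ⟨x, isConvexBlock_self_s16 x, rfl⟩) (caSeq_le_two_s16 x hx)
    have hmem : sInf { s | ∃ z, IsConvexBlock ee z ∧ s = caSeq z } ∈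
        { r | ∃ x : ℕ → C0, (∀ n, x n ∈ closedBall (0 : C0) 1) ∧
          r = sInf { s | ∃ z, IsConvexBlock x z ∧ s = caSeq z } } :=
      ⟨ee, ee_mem, rfl⟩
    have h1r : (1:ℝ) ≤ sInf { s | ∃ z, IsConvexBlock ee z ∧ s = caSeq z } := by
      refine le_csInf ⟨caSeq ee, ee, isConvexBlock_self_s16 ee, rfl⟩ ?_
      rintro s ⟨z, hz, rfl⟩
      exact one_le_caSeq_block hz
    exact le_trans h1r (le_csSup hbdd hmem)
  · rw [RQ]
    refine Real.sSup_le ?_ (by norm_num)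
    rintro r ⟨x, hx, rfl⟩
    obtain ⟨z, hz, hca⟩ := exists_block x hx
    exact le_trans (csInf_le (hlb x) ⟨z, hz, rfl⟩) hca
end
end
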